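/- Let (X, 𝓕) be a measurable space, μ a σ-finite measure on it, and 𝓕^fin = {A ∈ 𝓕 : μ(A) < ∞}. Let M : 𝓕^fin → ℂ be finitely additive (M(A ∪ B) = M(A) + M(B) for disjoint A, B ∈ 𝓕^fin) with M(A) = 0 whenever μ(A) = 0, and suppose there is C > 0 such that Σ_{n=1}^N |M(A_n)|² / μ(A_n) ≤ C for every finite family of pairwise disjoint sets A₁,…,A_N ∈ 𝓕^fin with μ(A_n) > 0. Then for every J ∈ ℕ, every B₁,…,B_J ∈ 𝓕^fin, and every b₁,…,b_J ∈ ℂ, one has |Σ_{j=1}^J b_j M(B_j)|² ≤ C · Σ_{i,j=1}^J b_i · conj(b_j) · μ(B_i ∩ B_j); that is, the kernel μ(A ∩ B) − M(A) · conj(M(B)) / C is positive definite on 𝓕^fin. -/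

import Mathlib

open MeasureTheory Finset

lemma M_biUnion' {X : Type*} [MeasurableSpace X] (μ : Measure X) (M : Set X → ℂ)
    (hadd : ∀ A B : Set X, MeasurableSet A → MeasurableSet B → μ A < ⊤ → μ B < ⊤ →
      Disjoint A B → M (A ∪ B) = M A + M B)
    (h0 : M ∅ = 0) {ι : Type*} (s : Finset ι) (A : ι → Set X)
    (hm : ∀ i ∈ s, MeasurableSet (A i)) (hf : ∀ i ∈ s, μ (A i) < ⊤)
    (hd : Set.PairwiseDisjoint (s : Set ι) A) :
    M (⋃ i ∈ s, A i) = ∑ i ∈ s, M (A i) := by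
  classical
  induction s using Finset.induction_on with
  | empty => simpa using h0
  | @insert a s ha ih =>
    have hmU : MeasurableSet (⋃ i ∈ s, A i) :=
      s.measurableSet_biUnion (fun i hi => hm i (mem_insert_of_mem hi))
    have hfU : μ (⋃ i ∈ s, A i) < ⊤ := by
      refine lt_of_le_of_lt (measure_biUnion_finset_le s A) ?_
      exact ENNReal.sum_lt_top.2 fun i hi => hf i (mem_insert_of_mem hi)
    have hdis : Disjoint (A a) (⋃ i ∈ s, A i) := by
      simp only [Set.disjoint_iUnion_right]
      intro i hi
      exact hd (mem_insert_self a s) (mem_insert_of_mem hi) (fun h => ha (h ▸ hi))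
    rw [Finset.set_biUnion_insert, hadd _ _ (hm a (mem_insert_self a s)) hmU
        (hf a (mem_insert_self a s)) hfU hdis,
      Finset.sum_insert ha,
      ih (fun i hi => hm i (mem_insert_of_mem hi)) (fun i hi => hf i (mem_insert_of_mem hi))
        (hd.subset (by simp [Finset.coe_subset]))]

/-- If a finitely additive, absolutely continuous set function `M` satisfies the bound
`∑ |M(Aₙ)|²/μ(Aₙ) ≤ C` over all finite disjoint families, then the kernel
`μ(A ∩ B) - M(A) conj(M(B)) / C` is positive definite on the sets of finite measure. -/
theorem stmt4 {X : Type*} [MeasurableSpace X] (μ : Measure X) [SigmaFinite μ]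
    (M : Set X → ℂ)
    (hadd : ∀ A B : Set X, MeasurableSet A → MeasurableSet B → μ A < ⊤ → μ B < ⊤ →
      Disjoint A B → M (A ∪ B) = M A + M B)
    (hac : ∀ A : Set X, MeasurableSet A → μ A = 0 → M A = 0)
    (C : ℝ) (hC : 0 < C)
    (hbound : ∀ (N : ℕ) (A : Fin N → Set X),
      (∀ n, MeasurableSet (A n)) → (∀ n, μ (A n) < ⊤) → (∀ n, 0 < μ (A n)) →
      Pairwise (Function.onFun Disjoint A) →
      ∑ n, ‖M (A n)‖ ^ 2 / (μ (A n)).toReal ≤ C) :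
    ∀ (J : ℕ) (B : Fin J → Set X), (∀ j, MeasurableSet (B j)) → (∀ j, μ (B j) < ⊤) →
      ∀ b : Fin J → ℂ,
        ‖∑ j, b j * M (B j)‖ ^ 2 ≤
          C * (∑ i, ∑ j, b i * (starRingEnd ℂ) (b j) * ((μ (B i ∩ B j)).toReal : ℂ)).re := by
  classical
  intro J B hmeas hfin b
  set A : Finset (Fin J) → Set X := fun S => ⋂ j, if j ∈ S then B j else (B j)ᶜ with hA
  have hmemA : ∀ (S) (x : X), x ∈ A S ↔ ∀ j, x ∈ B j ↔ j ∈ S := by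
    intro S x
    simp only [hA, Set.mem_iInter]
    refine forall_congr' fun j => ?_
    by_cases h : j ∈ S <;> simp [h]
  have hAmeas : ∀ S, MeasurableSet (A S) := by
    intro S
    exact MeasurableSet.iInter fun j => by
      by_cases h : j ∈ S <;> simp [h, hmeas j, (hmeas j).compl]
  have hAsub : ∀ S j, j ∈ S → A S ⊆ B j := fun S j hj x hx => ((hmemA S x).1 hx j).2 hj
  have hAfin : ∀ S : Finset (Fin J), S.Nonempty → μ (A S) < ⊤ := by
    rintro S ⟨j, hj⟩
    exact lt_of_le_of_lt (measure_mono (hAsub S j hj)) (hfin j)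
  have hAdisj : ∀ S T : Finset (Fin J), S ≠ T → Disjoint (A S) (A T) := by
    intro S T hST
    rw [Set.disjoint_left]
    intro x hxS hxT
    exact hST (Finset.ext fun j => ((hmemA S x).1 hxS j).symm.trans ((hmemA T x).1 hxT j))
  have h0 : M ∅ = 0 := hac ∅ MeasurableSet.empty measure_empty
  set c : Finset (Fin J) → ℂ := fun S => ∑ j ∈ S, b j with hc
  set μr : Finset (Fin J) → ℝ := fun S => (μ (A S)).toReal with hμr
  -- covering of B i ∩ B j
  have hBij : ∀ i j : Fin J, B i ∩ B j =
      ⋃ S ∈ univ.filter (fun S : Finset (Fin J) => i ∈ S ∧ j ∈ S), A S := by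
    intro i j
    ext x
    simp only [Set.mem_iUnion, mem_filter, mem_univ, true_and, Set.mem_inter_iff]
    constructor
    · rintro ⟨hxi, hxj⟩
      refine ⟨univ.filter (fun k => x ∈ B k), ⟨by simp [hxi], by simp [hxj]⟩, ?_⟩
      rw [hmemA]
      intro k; simp
    · rintro ⟨S, ⟨hiS, hjS⟩, hxS⟩
      exact ⟨hAsub S i hiS hxS, hAsub S j hjS hxS⟩
  -- covering of B j
  have hBj : ∀ j : Fin J, B j = ⋃ S ∈ univ.filter (fun S : Finset (Fin J) => j ∈ S), A S := by
    intro j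
    have := hBij j j
    simpa [Set.inter_self, and_self] using this
  have hMB : ∀ j : Fin J, M (B j) = ∑ S ∈ univ.filter (fun S : Finset (Fin J) => j ∈ S), M (A S) := by
    intro j
    rw [hBj j]
    refine M_biUnion' μ M hadd h0 _ _ (fun S _ => hAmeas S) ?_ ?_
    · intro S hS
      rw [mem_filter] at hS
      exact hAfin S ⟨j, hS.2⟩
    · intro S _ T _ hST
      exact hAdisj S T hST
  have hμij : ∀ i j : Fin J, (μ (B i ∩ B j)).toReal =
      ∑ S ∈ univ.filter (fun S : Finset (Fin J) => i ∈ S ∧ j ∈ S), μr S := by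
    intro i j
    rw [hBij i j, measure_biUnion_finset (fun S _ T _ hST => hAdisj S T hST)
      (fun S _ => hAmeas S), ENNReal.toReal_sum]
    intro S hS
    rw [mem_filter] at hS
    exact (hAfin S ⟨i, hS.2.1⟩).ne
  -- rewrite LHS sum
  have key1 : ∑ j, b j * M (B j) = ∑ S : Finset (Fin J), c S * M (A S) := by
    calc ∑ j, b j * M (B j)
        = ∑ j, ∑ S ∈ univ.filter (fun S : Finset (Fin J) => j ∈ S), b j * M (A S) := by
          refine Finset.sum_congr rfl fun j _ => ?_
          rw [hMB j, Finset.mul_sum]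
      _ = ∑ j, ∑ S : Finset (Fin J), if j ∈ S then b j * M (A S) else 0 := by
          simp [Finset.sum_filter]
      _ = ∑ S : Finset (Fin J), ∑ j, if j ∈ S then b j * M (A S) else 0 := Finset.sum_comm
      _ = ∑ S : Finset (Fin J), c S * M (A S) := by
          refine Finset.sum_congr rfl fun S _ => ?_
          rw [Finset.sum_ite_mem, Finset.univ_inter, hc, Finset.sum_mul]
  -- rewrite RHS double sum
  have key2 : (∑ i, ∑ j, b i * (starRingEnd ℂ) (b j) * ((μ (B i ∩ B j)).toReal : ℂ))
      = ∑ S : Finset (Fin J), c S * (starRingEnd ℂ) (c S) * (μr S : ℂ) := by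
    calc ∑ i, ∑ j, b i * (starRingEnd ℂ) (b j) * ((μ (B i ∩ B j)).toReal : ℂ)
        = ∑ i, ∑ j, ∑ S ∈ univ.filter (fun S : Finset (Fin J) => i ∈ S ∧ j ∈ S),
            b i * (starRingEnd ℂ) (b j) * (μr S : ℂ) := by
          refine Finset.sum_congr rfl fun i _ => Finset.sum_congr rfl fun j _ => ?_
          rw [hμij i j]
          push_cast
          rw [Finset.mul_sum]
      _ = ∑ i, ∑ j, ∑ S : Finset (Fin J),
            if i ∈ S ∧ j ∈ S then b i * (starRingEnd ℂ) (b j) * (μr S : ℂ) else 0 := by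
          simp [Finset.sum_filter]
      _ = ∑ i, ∑ S : Finset (Fin J), ∑ j,
            if i ∈ S ∧ j ∈ S then b i * (starRingEnd ℂ) (b j) * (μr S : ℂ) else 0 := by
          exact Finset.sum_congr rfl fun i _ => Finset.sum_comm
      _ = ∑ S : Finset (Fin J), ∑ i, ∑ j,
            if i ∈ S ∧ j ∈ S then b i * (starRingEnd ℂ) (b j) * (μr S : ℂ) else 0 :=
          Finset.sum_comm
      _ = ∑ S : Finset (Fin J), ∑ i ∈ S, ∑ j ∈ S,
            b i * (starRingEnd ℂ) (b j) * (μr S : ℂ) := by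
          refine Finset.sum_congr rfl fun S _ => ?_
          simp only [ite_and]
          rw [show (∑ i, ∑ j, if i ∈ S then (if j ∈ S then
              b i * (starRingEnd ℂ) (b j) * (μr S : ℂ) else 0) else 0) =
            ∑ i, (if i ∈ S then (∑ j, if j ∈ S then
              b i * (starRingEnd ℂ) (b j) * (μr S : ℂ) else 0) else 0) from
            Finset.sum_congr rfl fun i _ => by by_cases h : i ∈ S <;> simp [h]]
          rw [Finset.sum_ite_mem, Finset.univ_inter]
          exact Finset.sum_congr rfl fun i _ => by rw [Finset.sum_ite_mem, Finset.univ_inter]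
      _ = ∑ S : Finset (Fin J), c S * (starRingEnd ℂ) (c S) * (μr S : ℂ) := by
          refine Finset.sum_congr rfl fun S _ => ?_
          rw [hc, map_sum, Finset.sum_mul, Finset.sum_mul]
          exact Finset.sum_congr rfl fun i _ => by rw [Finset.mul_sum, Finset.sum_mul]
  have key2re : (∑ i, ∑ j, b i * (starRingEnd ℂ) (b j) * ((μ (B i ∩ B j)).toReal : ℂ)).re
      = ∑ S : Finset (Fin J), ‖c S‖ ^ 2 * μr S := by
    rw [key2]
    have : ∀ S : Finset (Fin J), c S * (starRingEnd ℂ) (c S) * (μr S : ℂ)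
        = ((‖c S‖ ^ 2 * μr S : ℝ) : ℂ) := by
      intro S
      rw [Complex.mul_conj]
      push_cast
      rw [Complex.normSq_eq_norm_sq]
      norm_cast
    simp_rw [this]
    rw [← Complex.ofReal_sum, Complex.ofReal_re]
  -- restrict to positive-measure nonempty atoms
  set T : Finset (Finset (Fin J)) :=
    univ.filter (fun S => S.Nonempty ∧ 0 < μ (A S)) with hT
  have hvanish : ∀ S : Finset (Fin J), S ∉ T → c S = 0 ∨ μr S = 0 ∧ M (A S) = 0 := by
    intro S hS
    rw [hT, mem_filter] at hS
    push_neg at hS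
    by_cases hne : S.Nonempty
    · have hμ0 : μ (A S) = 0 := le_antisymm (hS (mem_univ S) hne) zero_le
      exact Or.inr ⟨by rw [hμr]; simp [hμ0], hac _ (hAmeas S) hμ0⟩
    · rw [not_nonempty_iff_eq_empty] at hne
      exact Or.inl (by rw [hc, hne]; simp)
  have hsumT : ∑ S : Finset (Fin J), c S * M (A S) = ∑ S ∈ T, c S * M (A S) := by
    refine (Finset.sum_subset (Finset.subset_univ T) ?_).symm
    intro S _ hS
    rcases hvanish S hS with h | ⟨_, h⟩
    · rw [h, zero_mul]
    · rw [h, mul_zero]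
  have hsumT2 : ∑ S : Finset (Fin J), ‖c S‖ ^ 2 * μr S = ∑ S ∈ T, ‖c S‖ ^ 2 * μr S := by
    refine (Finset.sum_subset (Finset.subset_univ T) ?_).symm
    intro S _ hS
    rcases hvanish S hS with h | ⟨h, _⟩
    · rw [h]; simp
    · rw [h, mul_zero]
  have hμrpos : ∀ S ∈ T, 0 < μr S := by
    intro S hS
    rw [hT, mem_filter] at hS
    exact ENNReal.toReal_pos hS.2.2.ne' (hAfin S hS.2.1).ne
  -- the hbound application
  have hMsum : ∑ S ∈ T, ‖M (A S)‖ ^ 2 / μr S ≤ C := by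
    have e : Fin T.card ≃ {S // S ∈ T} := T.equivFin.symm
    have hTmem : ∀ n, (e n : Finset (Fin J)) ∈ T := fun n => (e n).2
    have hTfilt : ∀ n, ((e n : Finset (Fin J)).Nonempty ∧ 0 < μ (A (e n))) := by
      intro n
      have := hTmem n
      simp only [hT, mem_filter, mem_univ, true_and] at this
      exact this
    have hTne : ∀ n, (e n : Finset (Fin J)).Nonempty := fun n => (hTfilt n).1
    have hb := hbound T.card (fun n => A (e n))
      (fun n => hAmeas _) (fun n => hAfin _ (hTne n))
      (fun n => (hTfilt n).2)
      (fun m n hmn => hAdisj _ _ (fun h => hmn (e.injective (Subtype.ext h))))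
    calc ∑ S ∈ T, ‖M (A S)‖ ^ 2 / μr S
        = ∑ n : Fin T.card, ‖M (A (e n))‖ ^ 2 / μr (e n) := by
          rw [← Finset.sum_coe_sort T (fun S => ‖M (A S)‖ ^ 2 / μr S)]
          exact (Equiv.sum_comp e (fun S : {S // S ∈ T} => ‖M (A S)‖ ^ 2 / μr S)).symm
      _ ≤ C := hb
  -- Cauchy-Schwarz
  have hCS : ‖∑ S ∈ T, c S * M (A S)‖ ^ 2 ≤ (∑ S ∈ T, ‖c S‖ ^ 2 * μr S) * C := by
    have htri : ‖∑ S ∈ T, c S * M (A S)‖ ≤ ∑ S ∈ T, ‖c S‖ * ‖M (A S)‖ := by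
      refine (norm_sum_le _ _).trans_eq ?_
      exact Finset.sum_congr rfl fun S _ => norm_mul _ _
    have h1 : ‖∑ S ∈ T, c S * M (A S)‖ ^ 2 ≤ (∑ S ∈ T, ‖c S‖ * ‖M (A S)‖) ^ 2 :=
      pow_le_pow_left₀ (norm_nonneg _) htri 2
    have hcs := Finset.sum_mul_sq_le_sq_mul_sq T
      (fun S => ‖c S‖ * Real.sqrt (μr S)) (fun S => ‖M (A S)‖ / Real.sqrt (μr S))
    have heq : ∀ S ∈ T, ‖c S‖ * Real.sqrt (μr S) * (‖M (A S)‖ / Real.sqrt (μr S))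
        = ‖c S‖ * ‖M (A S)‖ := by
      intro S hS
      have h := Real.sqrt_pos.2 (hμrpos S hS)
      field_simp
    have heq2 : ∀ S ∈ T, (‖c S‖ * Real.sqrt (μr S)) ^ 2 = ‖c S‖ ^ 2 * μr S := by
      intro S hS
      rw [mul_pow, Real.sq_sqrt (hμrpos S hS).le]
    have heq3 : ∀ S ∈ T, (‖M (A S)‖ / Real.sqrt (μr S)) ^ 2 = ‖M (A S)‖ ^ 2 / μr S := by
      intro S hS
      rw [div_pow, Real.sq_sqrt (hμrpos S hS).le]
    rw [Finset.sum_congr rfl heq, Finset.sum_congr rfl heq2, Finset.sum_congr rfl heq3] at hcs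
    refine h1.trans (hcs.trans ?_)
    refine mul_le_mul_of_nonneg_left hMsum ?_
    exact Finset.sum_nonneg fun S hS => mul_nonneg (sq_nonneg _) (hμrpos S hS).le
  rw [key1, hsumT, key2re, hsumT2, mul_comm]
  exact hCS
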